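/- Let G be a k-connected graph with vertex r, and let C be a configuration on G of size n + y (y ≥ 0, n = |V(G)|) with exactly z vertices carrying zero pebbles. If ⌈(y+3z)/2⌉ ≤ k, then C is ⌈(y+z)/2⌉-fold r-solvable. -/

import Mathlib

set_option linter.unusedSectionVars false
set_option maxHeartbeats 1000000


open SimpleGraph

open Classical in
/-- A single pebbling step: remove two pebbles from `u` and add one to an adjacent `v`. -/
def PebStep {V : Type*} (G : SimpleGraph V) (C C' : V → ℕ) : Prop :=
  ∃ u v, G.Adj u v ∧ 2 ≤ C u ∧
    ∀ w, C' w = if w = u then C w - 2 else if w = v then C w + 1 else C w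

/-- `C` is `t`-fold `r`-solvable: some sequence of pebbling steps places `t` pebbles on `r`. -/
def Solvable {V : Type*} (G : SimpleGraph V) (C : V → ℕ) (r : V) (t : ℕ) : Prop :=
  ∃ C', Relation.ReflTransGen (PebStep G) C C' ∧ t ≤ C' r

/-- The size of a configuration: total number of pebbles. -/
def confSize {V : Type*} [Fintype V] (C : V → ℕ) : ℕ := ∑ v, C v

/-- The potential of a configuration: the number of pairwise disjoint pairs of
pebbles sitting on common vertices, `∑ v, ⌊C v / 2⌋`. -/
def potential {V : Type*} [Fintype V] (C : V → ℕ) : ℕ := ∑ v, C v / 2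

/-- Number of vertices with no pebbles. -/
noncomputable def numZeros {V : Type*} [Fintype V] (C : V → ℕ) : ℕ :=
  {v : V | C v = 0}.ncard

/-- The `t`-pebbling number of `G` with root `r`. -/
noncomputable def piT {V : Type*} [Fintype V] (G : SimpleGraph V) (r : V) (t : ℕ) : ℕ :=
  sInf {m | ∀ C : V → ℕ, m ≤ confSize C → Solvable G C r t}

/-- The `t`-pebbling number of `G`. -/
noncomputable def piTG {V : Type*} [Fintype V] (G : SimpleGraph V) (t : ℕ) : ℕ :=
  Finset.univ.sup fun r => piT G r t

/-- `G` is `k`-connected: more than `k` vertices and deleting fewer than `k`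
vertices leaves a connected graph. -/
def KConnected {V : Type*} [Fintype V] (G : SimpleGraph V) (k : ℕ) : Prop :=
  k < Fintype.card V ∧
    ∀ S : Set V, S.ncard < k → ((⊤ : G.Subgraph).deleteVerts S).coe.Connected

/-- `u` is a universal vertex: adjacent to every other vertex. -/
def IsUniversal {V : Type*} (G : SimpleGraph V) (u : V) : Prop :=
  ∀ v, v ≠ u → G.Adj u v

/-! ### Auxiliary machinery for the proof -/

noncomputable section SlideAux

open Classical

variable {V : Type*}

/-- The configuration after one pebbling step from `u` to `v`. -/
def stepCfg (u v : V) (D : V → ℕ) : V → ℕ :=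
  fun w => if w = u then D w - 2 else if w = v then D w + 1 else D w

theorem pebStep_stepCfg {G : SimpleGraph V} {u v : V} {D : V → ℕ}
    (h : G.Adj u v) (hD : 2 ≤ D u) : PebStep G D (stepCfg u v D) :=
  ⟨u, v, h, hD, fun _ => rfl⟩

/-- Internal vertices of a walk (with multiplicity). -/
def iList {G : SimpleGraph V} {x r : V} (w : G.Walk x r) : List V :=
  w.support.tail.dropLast

theorem iList_cons_nil {G : SimpleGraph V} {x r : V} (h : G.Adj x r) :
    iList (SimpleGraph.Walk.cons h .nil) = [] := rfl

theorem iList_cons {G : SimpleGraph V} {x b r : V} (h : G.Adj x b) (w : G.Walk b r)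
    (hw : ¬ w.Nil) : iList (SimpleGraph.Walk.cons h w) = b :: iList w := by
  unfold iList
  rw [SimpleGraph.Walk.support_cons]
  rw [List.tail_cons]
  cases w with
  | nil => simp at hw
  | cons h' w' =>
    rw [SimpleGraph.Walk.support_cons]
    rw [List.dropLast_cons_of_ne_nil (SimpleGraph.Walk.support_ne_nil _)]
    rfl

/-- Usage of a single slide (2 at the source, 1 at each internal visit). -/
def wUse {G : SimpleGraph V} {r : V} (e : Σ x : V, G.Walk x r) (v : V) : ℕ :=
  (if v = e.1 then 2 else 0) + (iList e.2).count v

/-- Total usage of a list of slides. -/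
def LUse {G : SimpleGraph V} {r : V} (L : List (Σ x : V, G.Walk x r)) (v : V) : ℕ :=
  (L.map (fun e => wUse e v)).sum

theorem wUse_mk {G : SimpleGraph V} {r a : V} (p : G.Walk a r) (v : V) :
    wUse ⟨a, p⟩ v = (if v = a then 2 else 0) + (iList p).count v := rfl

/-- Executing one slide along a walk. -/
theorem slide_exec {G : SimpleGraph V} {r x : V} (hxr : x ≠ r) (w : G.Walk x r)
    (D : V → ℕ) (hr : r ∉ iList w)
    (h : ∀ v, v ≠ r → wUse ⟨x, w⟩ v ≤ D v) :
    ∃ D', Relation.ReflTransGen (PebStep G) D D' ∧ D r + 1 ≤ D' r ∧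
      ∀ v, v ≠ r → D v ≤ D' v + wUse ⟨x, w⟩ v := by
  induction w generalizing D with
  | nil => exact absurd rfl hxr
  | @cons x b r hadj w ih =>
    have hxb : x ≠ b := hadj.ne
    have hDx : 2 ≤ D x := by
      have hx := h x hxr
      rw [wUse_mk, if_pos rfl] at hx
      omega
    cases w with
    | nil =>
      refine ⟨stepCfg x b D, Relation.ReflTransGen.single (pebStep_stepCfg hadj hDx), ?_, ?_⟩
      · have h1 : stepCfg x b D b = D b + 1 := by
          unfold stepCfg
          rw [if_neg (Ne.symm hxb), if_pos rfl]
        omega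
      · intro v hv
        rw [wUse_mk, iList_cons_nil, List.count_nil]
        unfold stepCfg
        by_cases hvx : v = x
        · subst hvx
          rw [if_pos rfl, if_pos rfl]
          omega
        · rw [if_neg hvx, if_neg hvx, if_neg hv]
          omega
    | @cons b c r h2 w2 =>
      have hIL : iList (SimpleGraph.Walk.cons hadj (SimpleGraph.Walk.cons h2 w2))
          = b :: iList (SimpleGraph.Walk.cons h2 w2) :=
        iList_cons hadj _ (SimpleGraph.Walk.not_nil_cons)
      have hbr : b ≠ r := by
        intro hh
        exact hr (by rw [hIL]; exact List.mem_cons.mpr (Or.inl hh.symm))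
      set w' := SimpleGraph.Walk.cons h2 w2 with hw'
      have hrw : r ∉ iList w' := fun hh => hr (by rw [hIL]; exact List.mem_cons_of_mem _ hh)
      set D1 := stepCfg x b D with hD1def
      have hD1x : D1 x = D x - 2 := by
        rw [hD1def]; unfold stepCfg; rw [if_pos rfl]
      have hD1b : D1 b = D b + 1 := by
        rw [hD1def]; unfold stepCfg; rw [if_neg (Ne.symm hxb), if_pos rfl]
      have hD1r : D1 r = D r := by
        rw [hD1def]; unfold stepCfg; rw [if_neg (Ne.symm hxr), if_neg (Ne.symm hbr)]
      have hD1other : ∀ u, u ≠ x → u ≠ b → D1 u = D u := by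
        intro u h1 h2'
        rw [hD1def]; unfold stepCfg; rw [if_neg h1, if_neg h2']
      have harg : ∀ v, v ≠ r → wUse ⟨b, w'⟩ v ≤ D1 v := by
        intro v hv
        have huse := h v hv
        rw [wUse_mk] at huse ⊢
        rw [hIL, List.count_cons] at huse
        simp only [beq_iff_eq] at huse
        by_cases hvx : v = x
        · have hvb : v ≠ b := by rw [hvx]; exact hxb
          rw [if_pos hvx] at huse
          rw [if_neg (fun hh : b = v => hvb hh.symm)] at huse
          rw [if_neg hvb]
          have hd1 : D1 v = D v - 2 := by rw [hvx]; exact hD1x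
          have hdx : 2 ≤ D v := by rw [hvx]; exact hDx
          omega
        · rw [if_neg hvx] at huse
          by_cases hvb : v = b
          · rw [if_pos (show b = v by rw [hvb])] at huse
            rw [if_pos hvb]
            have hd1 : D1 v = D b + 1 := by rw [hvb]; exact hD1b
            have hd1' : D v = D b := by rw [hvb]
            omega
          · rw [if_neg (fun hh : b = v => hvb hh.symm)] at huse
            rw [if_neg hvb]
            have := hD1other v hvx hvb
            omega
      obtain ⟨D', hrtg, hDr, hbound⟩ := ih hbr D1 hrw harg
      refine ⟨D', Relation.ReflTransGen.head (pebStep_stepCfg hadj hDx) hrtg, by omega, ?_⟩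
      intro v hv
      have hb2 := hbound v hv
      have huse := h v hv
      rw [wUse_mk] at hb2 huse ⊢
      rw [hIL, List.count_cons] at huse ⊢
      simp only [beq_iff_eq] at huse ⊢
      by_cases hvx : v = x
      · have hvb : v ≠ b := by rw [hvx]; exact hxb
        rw [if_pos hvx] at huse ⊢
        rw [if_neg (fun hh : b = v => hvb hh.symm)] at huse ⊢
        rw [if_neg hvb] at hb2
        have hd1 : D1 v = D v - 2 := by rw [hvx]; exact hD1x
        have hdx : 2 ≤ D v := by rw [hvx]; exact hDx
        omega
      · rw [if_neg hvx] at huse ⊢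
        by_cases hvb : v = b
        · rw [if_pos hvb] at hb2
          rw [if_pos (show b = v by rw [hvb])] at huse ⊢
          have hd1 : D1 v = D b + 1 := by rw [hvb]; exact hD1b
          have hd1' : D v = D b := by rw [hvb]
          omega
        · rw [if_neg (fun hh : b = v => hvb hh.symm)] at huse ⊢
          rw [if_neg hvb] at hb2
          have := hD1other v hvx hvb
          omega

theorem exec_list {G : SimpleGraph V} {r : V} (L : List (Σ x : V, G.Walk x r)) (D : V → ℕ)
    (hsrc : ∀ e ∈ L, e.1 ≠ r ∧ r ∉ iList e.2)
    (h : ∀ v, v ≠ r → LUse L v ≤ D v) :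
    ∃ D', Relation.ReflTransGen (PebStep G) D D' ∧ D r + L.length ≤ D' r := by
  revert hsrc h
  induction L generalizing D with
  | nil => exact fun _ _ => ⟨D, Relation.ReflTransGen.refl, by simp⟩
  | cons e L' ih =>
    intro hsrc h
    obtain ⟨ex, ew⟩ := e
    have he := hsrc ⟨ex, ew⟩ (List.mem_cons_self)
    have hhead : ∀ v, v ≠ r → wUse ⟨ex, ew⟩ v ≤ D v := by
      intro v hv
      have := h v hv
      simp only [LUse, List.map_cons, List.sum_cons] at this
      omega
    have he1 : ex ≠ r := he.1
    have he2 : r ∉ iList ew := he.2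
    obtain ⟨D1, hrtg1, hr1, hb1⟩ := slide_exec he1 ew D he2 hhead
    have harg : ∀ v, v ≠ r → LUse L' v ≤ D1 v := by
      intro v hv
      have h1 := h v hv
      have h2 := hb1 v hv
      simp only [LUse, List.map_cons, List.sum_cons] at h1 ⊢
      omega
    obtain ⟨D', hrtg2, hr2⟩ := ih D1 (fun e' he' => hsrc e' (List.mem_cons_of_mem _ he')) harg
    exact ⟨D', hrtg1.trans hrtg2, by simp only [List.length_cons]; omega⟩

end SlideAux

noncomputable section FlowAux

open Classical

variable {V : Type*} [Fintype V]

/-- Nodes of the auxiliary flow network. -/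
abbrev Nd (V : Type*) := Option (V × Bool)

def vIn (v : V) : Nd V := some (v, false)
def vOut (v : V) : Nd V := some (v, true)

def inflow (F : Nd V → Nd V → ℕ) (y : Nd V) : ℕ := ∑ x, F x y
def outflow (F : Nd V → Nd V → ℕ) (y : Nd V) : ℕ := ∑ x, F y x

def bump (F : Nd V → Nd V → ℕ) (a₀ b₀ : Nd V) : Nd V → Nd V → ℕ :=
  fun a b => if a = a₀ ∧ b = b₀ then F a b + 1 else F a b

def fdrop (F : Nd V → Nd V → ℕ) (a₀ b₀ : Nd V) : Nd V → Nd V → ℕ :=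
  fun a b => if a = a₀ ∧ b = b₀ then F a b - 1 else F a b

theorem bump_apply (F : Nd V → Nd V → ℕ) (a₀ b₀ a b : Nd V) :
    bump F a₀ b₀ a b = F a b + (if a = a₀ ∧ b = b₀ then 1 else 0) := by
  unfold bump; split_ifs <;> omega

theorem fdrop_le (F : Nd V → Nd V → ℕ) (a₀ b₀ a b : Nd V) :
    fdrop F a₀ b₀ a b ≤ F a b := by
  unfold fdrop; split_ifs <;> omega

theorem bump_fdrop (F : Nd V → Nd V → ℕ) (a₀ b₀ : Nd V) (h : 1 ≤ F a₀ b₀) :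
    bump (fdrop F a₀ b₀) a₀ b₀ = F := by
  funext a b
  unfold bump fdrop
  by_cases hh : a = a₀ ∧ b = b₀
  · rw [if_pos hh, if_pos hh, hh.1, hh.2]; omega
  · rw [if_neg hh, if_neg hh]

theorem outflow_bump (F : Nd V → Nd V → ℕ) (a₀ b₀ y : Nd V) :
    outflow (bump F a₀ b₀) y = outflow F y + (if y = a₀ then 1 else 0) := by
  unfold outflow
  have h1 : ∀ b, bump F a₀ b₀ y b = F y b + (if y = a₀ ∧ b = b₀ then 1 else 0) :=
    fun b => bump_apply F a₀ b₀ y b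
  rw [Finset.sum_congr rfl (fun b _ => h1 b), Finset.sum_add_distrib]
  congr 1
  by_cases hy : y = a₀
  · subst hy
    simp [Finset.sum_ite_eq']
  · simp only [hy, false_and, if_false, Finset.sum_const_zero]

theorem inflow_bump (F : Nd V → Nd V → ℕ) (a₀ b₀ y : Nd V) :
    inflow (bump F a₀ b₀) y = inflow F y + (if y = b₀ then 1 else 0) := by
  unfold inflow
  have h1 : ∀ a, bump F a₀ b₀ a y = F a y + (if a = a₀ ∧ y = b₀ then 1 else 0) :=
    fun a => bump_apply F a₀ b₀ a y
  rw [Finset.sum_congr rfl (fun a _ => h1 a), Finset.sum_add_distrib]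
  congr 1
  by_cases hy : y = b₀
  · subst hy
    simp [Finset.sum_ite_eq']
  · simp only [hy, and_false, if_false, Finset.sum_const_zero]

theorem outflow_fdrop (F : Nd V → Nd V → ℕ) (a₀ b₀ y : Nd V) (h : 1 ≤ F a₀ b₀) :
    outflow (fdrop F a₀ b₀) y + (if y = a₀ then 1 else 0) = outflow F y := by
  conv_rhs => rw [← bump_fdrop F a₀ b₀ h]
  rw [outflow_bump]

theorem inflow_fdrop (F : Nd V → Nd V → ℕ) (a₀ b₀ y : Nd V) (h : 1 ≤ F a₀ b₀) :
    inflow (fdrop F a₀ b₀) y + (if y = b₀ then 1 else 0) = inflow F y := by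
  conv_rhs => rw [← bump_fdrop F a₀ b₀ h]
  rw [inflow_bump]

/-- Sum over everything of inflow equals sum of outflow. -/
theorem sum_inflow_eq_sum_outflow (F : Nd V → Nd V → ℕ) :
    ∑ y, inflow F y = ∑ y, outflow F y := by
  unfold inflow outflow
  exact Finset.sum_comm

section Network

variable (G : SimpleGraph V) (r : V) (C f : V → ℕ) (s : ℕ)

/-- Capacities of the network: source `none` feeds fires `f v` into `v`'s out-node;
the in/out edge of `v` has the residual pass capacity; adjacency edges are ample. -/
def cap : Nd V → Nd V → ℕ := fun a b =>
  match a, b with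
  | none, some (v, true) => f v
  | some (v, false), some (w, true) =>
      if v = w then (if v = r then 0 else C v - 2 * f v) else 0
  | some (v, true), some (w, false) => if G.Adj v w then s + 1 else 0
  | _, _ => 0

theorem cap_to_SS (a : Nd V) : cap G r C f s a none = 0 := by
  rcases a with _ | ⟨v, _ | _⟩ <;> rfl

theorem cap_SS_out (v : V) : cap G r C f s none (vOut v) = f v := rfl

theorem cap_SS (b : Nd V) (h : cap G r C f s none b ≠ 0) : ∃ v, b = vOut v := by
  rcases b with _ | ⟨v, _ | _⟩
  · exact absurd rfl h
  · exact absurd rfl h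
  · exact ⟨v, rfl⟩

theorem cap_in_out (v : V) (hvr : v ≠ r) :
    cap G r C f s (vIn v) (vOut v) = C v - 2 * f v := by
  show (if v = v then (if v = r then 0 else C v - 2 * f v) else 0) = _
  rw [if_pos rfl, if_neg hvr]

theorem cap_vin (v : V) (b : Nd V) (h : cap G r C f s (vIn v) b ≠ 0) :
    b = vOut v ∧ v ≠ r := by
  rcases b with _ | ⟨w, _ | _⟩
  · exact absurd rfl h
  · exact absurd rfl h
  · have : (if v = w then (if v = r then 0 else C v - 2 * f v) else 0) ≠ 0 := h
    by_cases hvw : v = w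
    · subst hvw
      rw [if_pos rfl] at this
      by_cases hvr : v = r
      · rw [if_pos hvr] at this; exact absurd rfl this
      · exact ⟨rfl, hvr⟩
    · rw [if_neg hvw] at this; exact absurd rfl this

theorem cap_vout (v : V) (b : Nd V) (h : cap G r C f s (vOut v) b ≠ 0) :
    ∃ w, b = vIn w ∧ G.Adj v w := by
  rcases b with _ | ⟨w, _ | _⟩
  · exact absurd rfl h
  · refine ⟨w, rfl, ?_⟩
    by_contra hadj
    exact h (if_neg hadj)
  · exact absurd rfl h

theorem cap_out_in (v w : V) (h : G.Adj v w) :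
    cap G r C f s (vOut v) (vIn w) = s + 1 := if_pos h

/-- A flow on the network. -/
def IsFlow (F : Nd V → Nd V → ℕ) : Prop :=
  (∀ a b, F a b ≤ cap G r C f s a b) ∧
    ∀ y : Nd V, y ≠ none → y ≠ vIn r → inflow F y = outflow F y

def fval (F : Nd V → Nd V → ℕ) : ℕ := outflow F none

theorem inflow_SS_zero (F : Nd V → Nd V → ℕ) (hF : ∀ a b, F a b ≤ cap G r C f s a b) :
    inflow F none = 0 := by
  unfold inflow
  refine Finset.sum_eq_zero fun x _ => ?_
  have := hF x none
  rw [cap_to_SS] at this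
  omega

theorem outflow_sink_zero (F : Nd V → Nd V → ℕ)
    (hF : ∀ a b, F a b ≤ cap G r C f s a b) : outflow F (vIn r) = 0 := by
  unfold outflow
  refine Finset.sum_eq_zero fun b _ => ?_
  have h2 := hF (vIn r) b
  by_cases hb : cap G r C f s (vIn r) b = 0
  · omega
  · exact absurd (cap_vin G r C f s r b hb).2 (fun hh => hh rfl)

/-- value of a flow equals inflow at the sink. -/
theorem fval_eq_inflow_sink (F : Nd V → Nd V → ℕ) (hF : IsFlow G r C f s F) :
    fval F = inflow F (vIn r) := by
  have hglob := sum_inflow_eq_sum_outflow F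
  have hne : (none : Nd V) ≠ vIn r := by simp [vIn]
  have h1 : ∀ y ∈ (Finset.univ.erase (none : Nd V)).erase (vIn r),
      inflow F y = outflow F y := by
    intro y hy
    have hy1 := Finset.ne_of_mem_erase hy
    have hy2 := Finset.ne_of_mem_erase (Finset.mem_of_mem_erase hy)
    exact hF.2 y hy2 hy1
  have hsplit : ∀ g : Nd V → ℕ, ∑ y, g y =
      g none + g (vIn r) + ∑ y ∈ (Finset.univ.erase (none : Nd V)).erase (vIn r), g y := by
    intro g
    rw [← Finset.add_sum_erase _ g (Finset.mem_univ none)]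
    rw [← Finset.add_sum_erase _ g (Finset.mem_erase.mpr ⟨Ne.symm hne, Finset.mem_univ _⟩)]
    ring
  have h1' : ∑ y ∈ (Finset.univ.erase (none : Nd V)).erase (vIn r), inflow F y =
      ∑ y ∈ (Finset.univ.erase (none : Nd V)).erase (vIn r), outflow F y :=
    Finset.sum_congr rfl h1
  rw [hsplit (inflow F), hsplit (outflow F), h1'] at hglob
  have h2 := inflow_SS_zero G r C f s F hF.1
  have h3 := outflow_sink_zero G r C f s F hF.1
  unfold fval
  omega

end Network

theorem chain_suffix {α : Type*} {R : α → α → Prop} :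
    ∀ (l₁ : List α) (x y : α) (l₂ : List α), List.Chain R x (l₁ ++ y :: l₂) →
      List.Chain R y l₂ := by
  intro l₁
  induction l₁ with
  | nil => intro x y l₂ h; exact (List.chain_cons.mp h).2
  | cons a t ih =>
    intro x y l₂ h
    exact ih a y l₂ (List.chain_cons.mp h).2

theorem chain_dedup {α : Type*} {R : α → α → Prop} :
    ∀ (n : ℕ) (l : List α) (x : α), l.length ≤ n → List.Chain R x l →
      ∃ l', List.Chain R x l' ∧ (x :: l').Nodup ∧
        (x :: l').getLast? = (x :: l).getLast? ∧ l' ⊆ l := by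
  intro n
  induction n with
  | zero =>
    intro l x hl _
    have : l = [] := List.eq_nil_of_length_eq_zero (Nat.le_zero.mp hl)
    subst this
    exact ⟨[], List.Chain.nil, List.nodup_cons.mpr ⟨by simp, List.nodup_nil⟩, rfl,
      List.Subset.refl _⟩
  | succ n ih =>
    intro l x hl hchain
    cases l with
    | nil =>
      exact ⟨[], List.Chain.nil, List.nodup_cons.mpr ⟨by simp, List.nodup_nil⟩, rfl,
        List.Subset.refl _⟩
    | cons b t =>
      by_cases hmem : x ∈ b :: t
      · obtain ⟨l₁, l₂, hsplit⟩ := List.append_of_mem hmem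
        have hchain2 : List.Chain R x l₂ := chain_suffix l₁ x x l₂ (hsplit ▸ hchain)
        have hlen : l₂.length ≤ n := by
          have h9 := congrArg List.length hsplit
          simp only [List.length_cons, List.length_append] at h9 hl
          omega
        obtain ⟨l', h1, h2, h3, h4⟩ := ih l₂ x hlen hchain2
        refine ⟨l', h1, h2, ?_, ?_⟩
        · rw [h3, hsplit]
          have : x :: (l₁ ++ x :: l₂) = (x :: l₁) ++ x :: l₂ := by simp
          rw [this, List.getLast?_append_cons]
        · intro a ha
          rw [hsplit]
          exact List.mem_append.mpr (Or.inr (List.mem_cons_of_mem _ (h4 ha)))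
      · have hchain' : List.Chain R b t := (List.chain_cons.mp hchain).2
        have hlen : t.length ≤ n := by simp only [List.length_cons] at hl; omega
        obtain ⟨t', h1, h2, h3, h4⟩ := ih t b hlen hchain'
        refine ⟨b :: t', List.chain_cons.mpr ⟨(List.chain_cons.mp hchain).1, h1⟩, ?_, ?_, ?_⟩
        · refine List.nodup_cons.mpr ⟨?_, h2⟩
          intro hxm
          rcases List.mem_cons.mp hxm with h | h
          · exact hmem (h ▸ List.mem_cons_self)
          · exact hmem (List.mem_cons_of_mem _ (h4 h))
        · rw [List.getLast?_cons_cons, h3, List.getLast?_cons_cons]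
        · intro a ha
          rcases List.mem_cons.mp ha with h | h
          · exact h ▸ List.mem_cons_self
          · exact List.mem_cons_of_mem _ (h4 h)

section Network2

variable (G : SimpleGraph V) (r : V) (C f : V → ℕ) (s : ℕ)

/-- Residual relation. -/
def Res (F : Nd V → Nd V → ℕ) (a b : Nd V) : Prop :=
  F a b < cap G r C f s a b ∨ 0 < F b a

theorem augment_aux :
    ∀ (l : List (Nd V)) (x : Nd V) (F : Nd V → Nd V → ℕ),
    (∀ a b, F a b ≤ cap G r C f s a b) → List.Chain (Res G r C f s F) x l →
    (x :: l).Nodup → (x :: l).getLast? = some (vIn r) → x ≠ vIn r →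
    ∃ F', (∀ a b, F' a b ≤ cap G r C f s a b) ∧
      (∀ y, y ≠ x → y ≠ vIn r → outflow F' y + inflow F y = outflow F y + inflow F' y) ∧
      (outflow F' x + inflow F x = outflow F x + inflow F' x + 1) ∧
      (inflow F' (vIn r) + outflow F (vIn r) = inflow F (vIn r) + outflow F' (vIn r) + 1) ∧
      (∀ a b, a ∉ (x :: l) → (F' a b = F a b ∧ F' b a = F b a)) := by
  intro l
  induction l with
  | nil =>
    intro x F _ _ _ hlast hx
    simp only [List.getLast?_singleton, Option.some.injEq] at hlast
    exact absurd hlast hx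
  | cons b t ih =>
    intro x F hcap hchain hnodup hlast hx
    have hRxb : Res G r C f s F x b := (List.chain_cons.mp hchain).1
    have hchain' : List.Chain (Res G r C f s F) b t := (List.chain_cons.mp hchain).2
    have hxnot : x ∉ b :: t := (List.nodup_cons.mp hnodup).1
    have hxb : x ≠ b := fun hh => hxnot (hh ▸ List.mem_cons_self)
    cases t with
    | nil =>
      have hb : b = vIn r := by
        simp only [List.getLast?_cons_cons, List.getLast?_singleton,
          Option.some.injEq] at hlast
        exact hlast
      subst hb
      rcases hRxb with hfwd | hbwd
      · refine ⟨bump F x (vIn r), ?_, ?_, ?_, ?_, ?_⟩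
        · intro a b'
          rw [bump_apply]
          by_cases hh : a = x ∧ b' = vIn r
          · rw [if_pos hh, hh.1, hh.2]; omega
          · rw [if_neg hh]; have := hcap a b'; omega
        · intro y hy1 hy2
          rw [outflow_bump, inflow_bump, if_neg hy1, if_neg hy2]; omega
        · rw [outflow_bump, inflow_bump, if_pos rfl, if_neg hx]; omega
        · rw [outflow_bump, inflow_bump, if_pos rfl, if_neg (Ne.symm hx)]; omega
        · intro a b' ha
          have ha1 : a ≠ x := fun hh => ha (hh ▸ List.mem_cons_self)
          have ha2 : a ≠ vIn r := fun hh =>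
            ha (hh ▸ List.mem_cons_of_mem _ (List.mem_cons_self))
          constructor
          · unfold bump; rw [if_neg (fun hh => ha1 hh.1)]
          · unfold bump; rw [if_neg (fun hh => ha2 hh.2)]
      · refine ⟨fdrop F (vIn r) x, ?_, ?_, ?_, ?_, ?_⟩
        · intro a b'; exact le_trans (fdrop_le F _ _ a b') (hcap a b')
        · intro y hy1 hy2
          have o1 := outflow_fdrop F (vIn r) x y hbwd
          have i1 := inflow_fdrop F (vIn r) x y hbwd
          rw [if_neg hy2] at o1
          rw [if_neg hy1] at i1
          omega
        · have o1 := outflow_fdrop F (vIn r) x x hbwd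
          have i1 := inflow_fdrop F (vIn r) x x hbwd
          rw [if_neg hx] at o1
          rw [if_pos rfl] at i1
          omega
        · have o1 := outflow_fdrop F (vIn r) x (vIn r) hbwd
          have i1 := inflow_fdrop F (vIn r) x (vIn r) hbwd
          rw [if_pos rfl] at o1
          rw [if_neg (Ne.symm hx)] at i1
          omega
        · intro a b' ha
          have ha1 : a ≠ x := fun hh => ha (hh ▸ List.mem_cons_self)
          have ha2 : a ≠ vIn r := fun hh =>
            ha (hh ▸ List.mem_cons_of_mem _ (List.mem_cons_self))
          constructor
          · unfold fdrop; rw [if_neg (fun hh => ha2 hh.1)]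
          · unfold fdrop; rw [if_neg (fun hh => ha1 hh.2)]
    | cons b2 t2 =>
      have hlast' : (b :: b2 :: t2).getLast? = some (vIn r) := by
        rw [List.getLast?_cons_cons] at hlast
        exact hlast
      have hbr : b ≠ vIn r := by
        intro hh
        have h5 : (b2 :: t2).getLast? = some (vIn r) := by
          rw [List.getLast?_cons_cons] at hlast'
          exact hlast'
        obtain ⟨hne9, heq9⟩ := List.mem_getLast?_eq_getLast (show vIn r ∈ (b2 :: t2).getLast? from h5)
        have h6 : vIn r ∈ b2 :: t2 := heq9 ▸ List.getLast_mem hne9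
        have h7 : (b :: b2 :: t2).Nodup := (List.nodup_cons.mp hnodup).2
        exact (List.nodup_cons.mp h7).1 (hh ▸ h6)
      obtain ⟨F1, hc1, hdelta1, hatb, hsig, hunt⟩ :=
        ih b F hcap hchain' (List.nodup_cons.mp hnodup).2 hlast' hbr
      have hFxb : F1 x b = F x b ∧ F1 b x = F b x := hunt x b hxnot
      rcases hRxb with hfwd | hbwd
      · refine ⟨bump F1 x b, ?_, ?_, ?_, ?_, ?_⟩
        · intro a b'
          rw [bump_apply]
          by_cases hh : a = x ∧ b' = b
          · rw [if_pos hh, hh.1, hh.2, hFxb.1]; omega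
          · rw [if_neg hh]; have := hc1 a b'; omega
        · intro y hy1 hy2
          rw [outflow_bump, inflow_bump, if_neg hy1]
          by_cases hyb : y = b
          · subst hyb
            rw [if_pos rfl]
            omega
          · rw [if_neg hyb]
            have := hdelta1 y hyb hy2
            omega
        · rw [outflow_bump, inflow_bump, if_pos rfl, if_neg hxb]
          have := hdelta1 x hxb hx
          omega
        · rw [outflow_bump, inflow_bump, if_neg (Ne.symm hx), if_neg (Ne.symm hbr)]
          omega
        · intro a b' ha
          have ha1 : a ≠ x := fun hh => ha (hh ▸ List.mem_cons_self)
          have ha3 : a ∉ b :: b2 :: t2 := fun hh => ha (List.mem_cons_of_mem _ hh)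
          have ha2 : a ≠ b := fun hh => ha3 (hh ▸ List.mem_cons_self)
          have h8 := hunt a b' ha3
          constructor
          · unfold bump; rw [if_neg (fun hh => ha1 hh.1)]; exact h8.1
          · unfold bump; rw [if_neg (fun hh => ha2 hh.2)]; exact h8.2
      · have hbwd1 : 1 ≤ F1 b x := by rw [hFxb.2]; omega
        refine ⟨fdrop F1 b x, ?_, ?_, ?_, ?_, ?_⟩
        · intro a b'; exact le_trans (fdrop_le F1 _ _ a b') (hc1 a b')
        · intro y hy1 hy2
          have o1 := outflow_fdrop F1 b x y hbwd1
          have i1 := inflow_fdrop F1 b x y hbwd1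
          rw [if_neg hy1] at i1
          by_cases hyb : y = b
          · subst hyb
            rw [if_pos rfl] at o1
            omega
          · rw [if_neg hyb] at o1
            have := hdelta1 y hyb hy2
            omega
        · have o1 := outflow_fdrop F1 b x x hbwd1
          have i1 := inflow_fdrop F1 b x x hbwd1
          rw [if_neg hxb] at o1
          rw [if_pos rfl] at i1
          have := hdelta1 x hxb hx
          omega
        · have o1 := outflow_fdrop F1 b x (vIn r) hbwd1
          have i1 := inflow_fdrop F1 b x (vIn r) hbwd1
          rw [if_neg (Ne.symm hbr)] at o1
          rw [if_neg (Ne.symm hx)] at i1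
          omega
        · intro a b' ha
          have ha1 : a ≠ x := fun hh => ha (hh ▸ List.mem_cons_self)
          have ha3 : a ∉ b :: b2 :: t2 := fun hh => ha (List.mem_cons_of_mem _ hh)
          have ha2 : a ≠ b := fun hh => ha3 (hh ▸ List.mem_cons_self)
          have h8 := hunt a b' ha3
          constructor
          · unfold fdrop; rw [if_neg (fun hh => ha2 hh.1)]; exact h8.1
          · unfold fdrop; rw [if_neg (fun hh => ha1 hh.2)]; exact h8.2

theorem augment_flow (F : Nd V → Nd V → ℕ) (hF : IsFlow G r C f s F)
    (hreach : Relation.ReflTransGen (Res G r C f s F) none (vIn r)) :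
    ∃ F', IsFlow G r C f s F' ∧ fval F' = fval F + 1 := by
  obtain ⟨l, hchain, hlast⟩ := List.exists_isChain_cons_of_relationReflTransGen hreach
  obtain ⟨l', hchain', hnodup', hlast', _⟩ := chain_dedup l.length l none le_rfl hchain
  have hne : (none : Nd V) ≠ vIn r := by simp [vIn]
  have hlast2 : ((none : Nd V) :: l').getLast? = some (vIn r) := by
    rw [hlast']
    rw [List.getLast?_eq_getLast_of_ne_nil (List.cons_ne_nil _ _), hlast]
  obtain ⟨F', hc, hdelta, hatSS, hsig, _⟩ :=
    augment_aux G r C f s l' none F hF.1 hchain' hnodup' hlast2 hne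
  refine ⟨F', ⟨hc, ?_⟩, ?_⟩
  · intro y hy1 hy2
    have h1 := hdelta y hy1 hy2
    have h2 := hF.2 y hy1 hy2
    omega
  · have h1 := inflow_SS_zero G r C f s F hF.1
    have h2 := inflow_SS_zero G r C f s F' hc
    unfold fval
    omega

theorem exists_maxflow :
    ∃ F, IsFlow G r C f s F ∧ ∀ F', IsFlow G r C f s F' → fval F' ≤ fval F := by
  classical
  set bound := ∑ y, cap G r C f s none y with hbound
  have hle : ∀ F', IsFlow G r C f s F' → fval F' ≤ bound := by
    intro F' hF'
    exact Finset.sum_le_sum fun y _ => hF'.1 none y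
  set P : ℕ → Prop := fun m => ∃ F, IsFlow G r C f s F ∧ fval F = m with hP
  have hP0 : P 0 := by
    refine ⟨fun _ _ => 0, ⟨fun a b => Nat.zero_le _, fun y _ _ => rfl⟩, ?_⟩
    unfold fval outflow
    simp
  have hspec : P (Nat.findGreatest P bound) :=
    Nat.findGreatest_spec (Nat.zero_le _) hP0
  obtain ⟨F, hF, hFval⟩ := hspec
  refine ⟨F, hF, ?_⟩
  intro F' hF'
  by_contra hgt
  push_neg at hgt
  have : ¬ P (fval F') :=
    Nat.findGreatest_is_greatest (hFval ▸ hgt) (hle F' hF')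
  exact this ⟨F', hF', rfl⟩

end Network2

section CutArg

variable (G : SimpleGraph V) (r : V) (C f : V → ℕ) (s : ℕ)

theorem maxflow_value_ge
    (k z : ℕ)
    (hconn : ∀ S : Set V, S.ncard < k → ((⊤ : G.Subgraph).deleteVerts S).coe.Connected)
    (hzc : (Finset.univ.filter (fun v => C v = 0)).card ≤ z)
    (hks : s + z ≤ k)
    (hfr : f r = 0) (hfs : ∑ v, f v = s) (hf2 : ∀ v, 2 * f v ≤ C v) :
    ∃ F, IsFlow G r C f s F ∧ s ≤ fval F := by
  obtain ⟨F, hF, hmax⟩ := exists_maxflow G r C f s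
  refine ⟨F, hF, ?_⟩
  by_contra hval'
  push_neg at hval'
  -- residual reachable set
  set R : Set (Nd V) := {x | Relation.ReflTransGen (Res G r C f s F) none x} with hR
  have hSSR : (none : Nd V) ∈ R := Relation.ReflTransGen.refl
  have hclosed : ∀ x ∈ R, ∀ y, Res G r C f s F x y → y ∈ R :=
    fun x hx y hxy => Relation.ReflTransGen.tail hx hxy
  have hsinkR : vIn r ∉ R := by
    intro hmem
    obtain ⟨F', hF', hFval'⟩ := augment_flow G r C f s F hF hmem
    have := hmax F' hF'
    omega
  have hsat : ∀ x ∈ R, ∀ y, y ∉ R → F x y = cap G r C f s x y ∧ F y x = 0 := by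
    intro x hx y hy
    constructor
    · by_contra hne
      have hlt : F x y < cap G r C f s x y := lt_of_le_of_ne (hF.1 x y) hne
      exact hy (hclosed x hx y (Or.inl hlt))
    · by_contra hne
      have : 0 < F y x := Nat.pos_of_ne_zero hne
      exact hy (hclosed x hx y (Or.inr this))
  classical
  set RF : Finset (Nd V) := Finset.univ.filter (fun x => x ∈ R) with hRF
  set RFc : Finset (Nd V) := Finset.univ.filter (fun x => x ∉ R) with hRFc
  have hmemRF : ∀ x : Nd V, x ∈ RF ↔ x ∈ R := by
    intro x; simp [hRF]
  have hmemRFc : ∀ x : Nd V, x ∈ RFc ↔ x ∉ R := by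
    intro x; simp [hRFc]
  -- conservation summed over RF
  have hpt : ∀ x ∈ RF, outflow F x = inflow F x + (if x = none then fval F else 0) := by
    intro x hx
    have hxR : x ∈ R := (hmemRF x).mp hx
    by_cases hxn : x = none
    · subst hxn
      rw [if_pos rfl]
      have h0 := inflow_SS_zero G r C f s F hF.1
      unfold fval
      omega
    · rw [if_neg hxn]
      have hxs : x ≠ vIn r := fun hh => hsinkR (hh ▸ hxR)
      exact (hF.2 x hxn hxs).symm
  have hsum1 : ∑ x ∈ RF, outflow F x = ∑ x ∈ RF, inflow F x + fval F := by
    rw [Finset.sum_congr rfl hpt, Finset.sum_add_distrib]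
    congr 1
    rw [Finset.sum_ite_eq' RF none (fun _ => fval F)]
    rw [if_pos ((hmemRF none).mpr hSSR)]
  -- expand into cross sums
  have hsplit : ∀ g : Nd V → ℕ, ∑ y, g y = ∑ y ∈ RF, g y + ∑ y ∈ RFc, g y := by
    intro g
    rw [hRF, hRFc]
    exact (Finset.sum_filter_add_sum_filter_not Finset.univ _ g).symm
  have hexp1 : ∑ x ∈ RF, outflow F x =
      (∑ x ∈ RF, ∑ y ∈ RF, F x y) + ∑ x ∈ RF, ∑ y ∈ RFc, F x y := by
    unfold outflow
    rw [← Finset.sum_add_distrib]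
    exact Finset.sum_congr rfl fun x _ => hsplit (fun y => F x y)
  have hexp2 : ∑ x ∈ RF, inflow F x =
      (∑ x ∈ RF, ∑ y ∈ RF, F y x) + ∑ x ∈ RF, ∑ y ∈ RFc, F y x := by
    unfold inflow
    rw [← Finset.sum_add_distrib]
    exact Finset.sum_congr rfl fun x _ => hsplit (fun y => F y x)
  have hAA : ∑ x ∈ RF, ∑ y ∈ RF, F x y = ∑ x ∈ RF, ∑ y ∈ RF, F y x :=
    Finset.sum_comm
  have hAin : ∑ x ∈ RF, ∑ y ∈ RFc, F y x = 0 := by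
    refine Finset.sum_eq_zero fun x hx => Finset.sum_eq_zero fun y hy => ?_
    exact (hsat x ((hmemRF x).mp hx) y ((hmemRFc y).mp hy)).2
  have hAcross : ∑ x ∈ RF, ∑ y ∈ RFc, F x y =
      ∑ x ∈ RF, ∑ y ∈ RFc, cap G r C f s x y := by
    refine Finset.sum_congr rfl fun x hx => Finset.sum_congr rfl fun y hy => ?_
    exact (hsat x ((hmemRF x).mp hx) y ((hmemRFc y).mp hy)).1
  have hCut : ∑ x ∈ RF, ∑ y ∈ RFc, cap G r C f s x y = fval F := by
    rw [hexp1, hexp2] at hsum1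
    omega
  have hcross_le : ∀ x ∈ RF, ∀ y ∈ RFc, cap G r C f s x y ≤ fval F := by
    intro x hx y hy
    rw [← hCut]
    calc cap G r C f s x y ≤ ∑ y' ∈ RFc, cap G r C f s x y' :=
          Finset.single_le_sum (fun _ _ => Nat.zero_le _) hy
      _ ≤ ∑ x' ∈ RF, ∑ y' ∈ RFc, cap G r C f s x' y' :=
          Finset.single_le_sum (f := fun x' => ∑ y' ∈ RFc, cap G r C f s x' y')
            (fun _ _ => Nat.zero_le _) hx
  -- the vertex sets W and B
  set W : Finset V := Finset.univ.filter (fun v => v ≠ r ∧ vOut v ∈ R) with hW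
  set B : Finset V := Finset.univ.filter (fun v => v ≠ r ∧ vIn v ∈ R ∧ vOut v ∉ R) with hB
  have hmemW : ∀ v, v ∈ W ↔ (v ≠ r ∧ vOut v ∈ R) := by intro v; simp [hW]
  have hmemB : ∀ v, v ∈ B ↔ (v ≠ r ∧ vIn v ∈ R ∧ vOut v ∉ R) := by intro v; simp [hB]
  -- W is nonempty
  have hWne : ∃ v, v ∈ W := by
    by_contra hempty
    push_neg at hempty
    have hall : ∀ v, F none (vOut v) = f v := by
      intro v
      by_cases hvr : v = r
      · have hfv : f v = 0 := by rw [hvr]; exact hfr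
        have h1 := hF.1 none (vOut v)
        rw [cap_SS_out] at h1
        omega
      · by_contra hne
        have hlt : F none (vOut v) < cap G r C f s none (vOut v) := by
          have := hF.1 none (vOut v)
          rw [cap_SS_out] at this ⊢
          omega
        have hmem : vOut v ∈ R := hclosed none hSSR _ (Or.inl hlt)
        exact (hempty v) ((hmemW v).mpr ⟨hvr, hmem⟩)
    have hinj : ∀ a ∈ (Finset.univ : Finset V), ∀ b ∈ Finset.univ, vOut a = vOut b → a = b := by
      intro a _ b _ h
      simpa [vOut] using h
    have h7 : ∑ y ∈ Finset.univ.image vOut, F none y = ∑ v, F none (vOut v) :=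
      Finset.sum_image hinj
    have himg : ∑ v, F none (vOut v) ≤ fval F := by
      unfold fval outflow
      rw [← h7]
      exact Finset.sum_le_sum_of_subset (Finset.subset_univ _)
    rw [Finset.sum_congr rfl (fun v _ => hall v), hfs] at himg
    omega
  -- neighbors of W stay in W ∪ B ∪ {r is excluded}
  have hWadj : ∀ v ∈ W, ∀ w, G.Adj v w → (w ≠ r ∧ (w ∈ W ∨ w ∈ B)) := by
    intro v hv w hadj
    have hvW := (hmemW v).mp hv
    have hinR : vIn w ∈ R := by
      by_contra hout
      have hc := hcross_le (vOut v) ((hmemRF _).mpr hvW.2) (vIn w) ((hmemRFc _).mpr hout)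
      rw [cap_out_in G r C f s v w hadj] at hc
      omega
    have hwr : w ≠ r := by
      intro hh
      exact hsinkR (hh ▸ hinR)
    refine ⟨hwr, ?_⟩
    by_cases hwo : vOut w ∈ R
    · exact Or.inl ((hmemW w).mpr ⟨hwr, hwo⟩)
    · exact Or.inr ((hmemB w).mpr ⟨hwr, hinR, hwo⟩)
  -- B must have at least k vertices
  have hBk : k ≤ B.card := by
    by_contra hlt
    push_neg at hlt
    have hconn' := hconn (↑B : Set V) (by rw [Set.ncard_coe_finset]; exact hlt)
    obtain ⟨w₀, hw₀⟩ := hWne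
    have hw₀W := (hmemW w₀).mp hw₀
    have hw₀B : w₀ ∉ (↑B : Set V) := by
      intro hh
      have := (hmemB w₀).mp hh
      exact this.2.2 hw₀W.2
    have hrB : r ∉ (↑B : Set V) := by
      intro hh
      exact ((hmemB r).mp hh).1 rfl
    have hw₀mem : w₀ ∈ ((⊤ : G.Subgraph).deleteVerts (↑B : Set V)).verts := by
      rw [SimpleGraph.Subgraph.deleteVerts_verts]
      exact ⟨trivial, hw₀B⟩
    have hrmem : r ∈ ((⊤ : G.Subgraph).deleteVerts (↑B : Set V)).verts := by
      rw [SimpleGraph.Subgraph.deleteVerts_verts]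
      exact ⟨trivial, hrB⟩
    have hreach := hconn'.preconnected ⟨w₀, hw₀mem⟩ ⟨r, hrmem⟩
    have hwalk : ∀ (a b : ((⊤ : G.Subgraph).deleteVerts (↑B : Set V)).verts)
        (p : ((⊤ : G.Subgraph).deleteVerts (↑B : Set V)).coe.Walk a b),
        b.1 = r → a.1 ∈ W → False := by
      intro a b p
      induction p with
      | nil =>
        intro hb ha
        exact ((hmemW _).mp ha).1 hb
      | @cons a' c' b' hadj p ih =>
        intro hb ha
        have hGadj : G.Adj a'.1 c'.1 := by
          have h9 := hadj
          simp only [SimpleGraph.Subgraph.coe_adj,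
            SimpleGraph.Subgraph.deleteVerts_adj, SimpleGraph.Subgraph.top_adj] at h9
          tauto
        have hstep := hWadj a'.1 ha c'.1 hGadj
        rcases hstep.2 with hc | hc
        · exact ih hb hc
        · have hc' := c'.2
          simp only [SimpleGraph.Subgraph.deleteVerts_verts, Set.mem_diff] at hc'
          exact hc'.2 (Finset.mem_coe.mpr hc)
    exact hreach.elim fun p => hwalk ⟨w₀, hw₀mem⟩ ⟨r, hrmem⟩ p rfl hw₀
  -- counting: each nonzero vertex of B contributes ≥ 1 to the cut
  have hcontrib : ∑ v ∈ B, (f v + (C v - 2 * f v)) ≤ fval F := by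
    rw [← hCut]
    have h1 : ∑ v ∈ B, f v ≤ ∑ y ∈ RFc, cap G r C f s none y := by
      have himg : ∑ v ∈ B, f v = ∑ y ∈ B.image vOut, cap G r C f s none y := by
        rw [Finset.sum_image (by intro a _ b _ h; simpa [vOut] using h)]
        exact Finset.sum_congr rfl fun v _ => (cap_SS_out G r C f s v).symm
      rw [himg]
      refine Finset.sum_le_sum_of_subset ?_
      intro y hy
      obtain ⟨v, hv, rfl⟩ := Finset.mem_image.mp hy
      exact (hmemRFc _).mpr ((hmemB v).mp hv).2.2
    have h2 : ∑ v ∈ B, (C v - 2 * f v) ≤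
        ∑ x ∈ RF.erase none, ∑ y ∈ RFc, cap G r C f s x y := by
      have himg : ∑ v ∈ B, (C v - 2 * f v) ≤
          ∑ x ∈ B.image vIn, ∑ y ∈ RFc, cap G r C f s x y := by
        rw [Finset.sum_image (by intro a _ b _ h; simpa [vIn] using h)]
        refine Finset.sum_le_sum fun v hv => ?_
        have hvB := (hmemB v).mp hv
        calc C v - 2 * f v = cap G r C f s (vIn v) (vOut v) :=
              (cap_in_out G r C f s v hvB.1).symm
          _ ≤ ∑ y ∈ RFc, cap G r C f s (vIn v) y :=
              Finset.single_le_sum (fun _ _ => Nat.zero_le _) ((hmemRFc _).mpr hvB.2.2)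
      refine le_trans himg (Finset.sum_le_sum_of_subset ?_)
      intro x hx
      obtain ⟨v, hv, rfl⟩ := Finset.mem_image.mp hx
      refine Finset.mem_erase.mpr ⟨by simp [vIn], (hmemRF _).mpr ((hmemB v).mp hv).2.1⟩
    have hsplitRF : ∑ x ∈ RF, ∑ y ∈ RFc, cap G r C f s x y =
        (∑ y ∈ RFc, cap G r C f s none y) +
          ∑ x ∈ RF.erase none, ∑ y ∈ RFc, cap G r C f s x y := by
      rw [← Finset.add_sum_erase _ _ ((hmemRF none).mpr hSSR)]
    rw [Finset.sum_add_distrib, hsplitRF]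
    omega
  -- each nonzero vertex counts
  have hterm : ∀ v ∈ B, (if C v = 0 then 0 else 1) ≤ f v + (C v - 2 * f v) := by
    intro v _
    have := hf2 v
    by_cases hc0 : C v = 0
    · rw [if_pos hc0]; omega
    · rw [if_neg hc0]; omega
  have hcount : B.card - z ≤ ∑ v ∈ B, (f v + (C v - 2 * f v)) := by
    have h3 : ∑ v ∈ B, (if C v = 0 then 0 else 1) ≤ ∑ v ∈ B, (f v + (C v - 2 * f v)) :=
      Finset.sum_le_sum hterm
    have h4 : ∑ v ∈ B, (if C v = 0 then (0:ℕ) else 1) =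
        (B.filter (fun v => ¬ C v = 0)).card := by
      rw [Finset.sum_ite, Finset.sum_const, Finset.sum_const]
      simp
    have h5 : (B.filter (fun v => C v = 0)).card +
        (B.filter (fun v => ¬ C v = 0)).card = B.card :=
      Finset.card_filter_add_card_filter_not _
    have h6 : (B.filter (fun v => C v = 0)).card ≤ z := by
      refine le_trans (Finset.card_le_card ?_) hzc
      intro v hv
      exact Finset.mem_filter.mpr ⟨Finset.mem_univ _, (Finset.mem_filter.mp hv).2⟩
    omega
  omega

end CutArg

theorem fdrop_apply {V : Type*} (F : Nd V → Nd V → ℕ) (a₀ b₀ a b : Nd V) :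
    fdrop F a₀ b₀ a b = F a b - (if a = a₀ ∧ b = b₀ then 1 else 0) := by
  unfold fdrop; split_ifs <;> omega

def fmass {V : Type*} [Fintype V] (F : Nd V → Nd V → ℕ) : ℕ := ∑ a, outflow F a

theorem fmass_bump (F : Nd V → Nd V → ℕ) (a₀ b₀ : Nd V) :
    fmass (bump F a₀ b₀) = fmass F + 1 := by
  unfold fmass
  rw [Finset.sum_congr rfl (fun a _ => outflow_bump F a₀ b₀ a), Finset.sum_add_distrib]
  congr 1
  rw [Finset.sum_ite_eq' Finset.univ a₀ (fun _ => 1)]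
  simp

theorem fmass_fdrop (F : Nd V → Nd V → ℕ) (a₀ b₀ : Nd V) (h : 1 ≤ F a₀ b₀) :
    fmass (fdrop F a₀ b₀) + 1 = fmass F := by
  conv_rhs => rw [← bump_fdrop F a₀ b₀ h]
  rw [fmass_bump]

theorem outflow_le_fmass (F : Nd V → Nd V → ℕ) (x : Nd V) : outflow F x ≤ fmass F :=
  Finset.single_le_sum (f := fun a => outflow F a) (fun _ _ => Nat.zero_le _)
    (Finset.mem_univ x)

theorem vin_ne_vout {V : Type*} (v w : V) : vIn v ≠ vOut w := by simp [vIn, vOut]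

theorem vout_ne_vin {V : Type*} (v w : V) : vOut v ≠ vIn w := by simp [vIn, vOut]

theorem vin_inj' {V : Type*} {v w : V} (h : vIn v = vIn w) : v = w := by
  simpa [vIn] using h

theorem vout_inj' {V : Type*} {v w : V} (h : vOut v = vOut w) : v = w := by
  simpa [vOut] using h

section ExtractArg

variable (G : SimpleGraph V) (r : V) (C f : V → ℕ) (s : ℕ)

/-- Flow with one unit of excess at `vOut x`. -/
def TokFlow (F : Nd V → Nd V → ℕ) (x : V) : Prop :=
  (∀ a b, F a b ≤ cap G r C f s a b) ∧
  (∀ y : Nd V, y ≠ none → y ≠ vIn r → y ≠ vOut x → inflow F y = outflow F y) ∧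
  (inflow F (vOut x) + 1 = outflow F (vOut x))

theorem extract_one : ∀ (M : ℕ) (F : Nd V → Nd V → ℕ) (x : V), x ≠ r →
    TokFlow G r C f s F x → fmass F ≤ M →
    ∃ (w : G.Walk x r) (F' : Nd V → Nd V → ℕ),
      (∀ a b, F' a b ≤ F a b) ∧
      (∀ y : Nd V, y ≠ none → y ≠ vIn r → inflow F' y = outflow F' y) ∧
      (∀ b, F' none b = F none b) ∧
      (∀ v : V, F (vIn v) (vOut v) = F' (vIn v) (vOut v) + (iList w).count v) ∧
      r ∉ iList w := by
  intro M
  induction M with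
  | zero =>
    intro F x hxr htok hm
    exfalso
    have h1 := outflow_le_fmass F (vOut x)
    have h2 := htok.2.2
    omega
  | succ M ih =>
    intro F x hxr htok hm
    have hpos : 0 < outflow F (vOut x) := by
      have := htok.2.2; omega
    have hex : ∃ b, F (vOut x) b ≠ 0 := by
      by_contra hc
      push_neg at hc
      have : outflow F (vOut x) = 0 := Finset.sum_eq_zero fun b _ => hc b
      omega
    obtain ⟨b, hb⟩ := hex
    have hcapb : cap G r C f s (vOut x) b ≠ 0 := by
      have := htok.1 (vOut x) b
      omega
    obtain ⟨u, rfl, hadj⟩ := cap_vout G r C f s x b hcapb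
    have hxu : x ≠ u := hadj.ne
    have hFb : 1 ≤ F (vOut x) (vIn u) := Nat.one_le_iff_ne_zero.mpr hb
    set F1 := fdrop F (vOut x) (vIn u) with hF1
    by_cases hur : u = r
    · -- single step to the sink
      subst hur
      refine ⟨SimpleGraph.Walk.cons hadj .nil, F1, ?_, ?_, ?_, ?_, ?_⟩
      · intro a b'; exact fdrop_le F _ _ a b'
      · intro y hy1 hy2
        have i1 := inflow_fdrop F (vOut x) (vIn u) y hFb
        have o1 := outflow_fdrop F (vOut x) (vIn u) y hFb
        rw [← hF1] at i1 o1
        rw [if_neg hy2] at i1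
        by_cases hyx : y = vOut x
        · subst hyx
          rw [if_pos rfl] at o1
          have := htok.2.2
          omega
        · rw [if_neg hyx] at o1
          have := htok.2.1 y hy1 hy2 hyx
          omega
      · intro b'
        rw [hF1, fdrop_apply]
        rw [if_neg (fun hh => (by simp [vOut] : (none : Nd V) ≠ vOut x) hh.1)]
        omega
      · intro v
        rw [hF1, fdrop_apply]
        rw [if_neg (fun hh => (vin_ne_vout v x) hh.1)]
        rw [iList_cons_nil, List.count_nil]
        omega
      · rw [iList_cons_nil]; exact List.not_mem_nil
    · -- continue through u
      have hFu : F1 (vIn u) (vOut u) = F (vIn u) (vOut u) := by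
        rw [hF1, fdrop_apply]
        rw [if_neg (fun hh => (vin_ne_vout u x) hh.1)]
        omega
      have houtu : outflow F (vIn u) = F (vIn u) (vOut u) := by
        unfold outflow
        refine Finset.sum_eq_single (vOut u) (fun b' _ hb' => ?_) (by simp)
        by_cases hcb : cap G r C f s (vIn u) b' = 0
        · have := htok.1 (vIn u) b'; omega
        · exact absurd (cap_vin G r C f s u b' hcb).1 hb'
      have hinu : 1 ≤ inflow F (vIn u) := by
        have : F (vOut x) (vIn u) ≤ inflow F (vIn u) :=
          Finset.single_le_sum (f := fun a => F a (vIn u)) (fun _ _ => Nat.zero_le _)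
            (Finset.mem_univ (vOut x))
        omega
      have hcons_u : inflow F (vIn u) = outflow F (vIn u) :=
        htok.2.1 (vIn u) (by simp [vIn]) (fun hh => hur (vin_inj' hh))
          (vin_ne_vout u x)
      have hFuu : 1 ≤ F1 (vIn u) (vOut u) := by
        rw [hFu]; omega
      set F2 := fdrop F1 (vIn u) (vOut u) with hF2
      have htok2 : TokFlow G r C f s F2 u := by
        refine ⟨?_, ?_, ?_⟩
        · intro a b'
          exact le_trans (fdrop_le F1 _ _ a b') (le_trans (fdrop_le F _ _ a b') (htok.1 a b'))
        · intro y hy1 hy2 hy3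
          have i1 := inflow_fdrop F (vOut x) (vIn u) y hFb
          have o1 := outflow_fdrop F (vOut x) (vIn u) y hFb
          have i2 := inflow_fdrop F1 (vIn u) (vOut u) y hFuu
          have o2 := outflow_fdrop F1 (vIn u) (vOut u) y hFuu
          rw [← hF1] at i1 o1
          rw [← hF2] at i2 o2
          rw [if_neg hy3] at i2
          by_cases hyu : y = vIn u
          · subst hyu
            rw [if_pos rfl] at i1
            rw [if_pos rfl] at o2
            rw [if_neg (vin_ne_vout u x)] at o1
            omega
          · rw [if_neg hyu] at i1 o2
            by_cases hyx : y = vOut x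
            · subst hyx
              rw [if_pos rfl] at o1
              have := htok.2.2
              omega
            · rw [if_neg hyx] at o1
              have := htok.2.1 y hy1 hy2 hyx
              omega
        · have i1 := inflow_fdrop F (vOut x) (vIn u) (vOut u) hFb
          have o1 := outflow_fdrop F (vOut x) (vIn u) (vOut u) hFb
          have i2 := inflow_fdrop F1 (vIn u) (vOut u) (vOut u) hFuu
          have o2 := outflow_fdrop F1 (vIn u) (vOut u) (vOut u) hFuu
          rw [if_neg (vout_ne_vin u u)] at i1
          rw [if_neg (fun hh => hxu (vout_inj' hh).symm)] at o1
          rw [if_pos rfl] at i2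
          rw [if_neg (fun hh => (vin_ne_vout u u) hh.symm)] at o2
          have hconsu2 : inflow F (vOut u) = outflow F (vOut u) :=
            htok.2.1 (vOut u) (by simp [vOut]) (vout_ne_vin u r)
              (fun hh => hxu (vout_inj' hh).symm)
          rw [← hF1] at i1 o1
          rw [← hF2] at i2 o2
          omega
      have hmass2 : fmass F2 ≤ M := by
        have m1 := fmass_fdrop F (vOut x) (vIn u) hFb
        have m2 := fmass_fdrop F1 (vIn u) (vOut u) hFuu
        rw [← hF1] at m1
        rw [← hF2] at m2
        omega
      obtain ⟨w', F', hle', hcons', hSS', hacc', hrint'⟩ := ih F2 u hur htok2 hmass2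
      have hw'nil : ¬ w'.Nil := by
        cases w' with
        | nil => exact absurd rfl hur
        | cons h' p' => exact SimpleGraph.Walk.not_nil_cons
      refine ⟨SimpleGraph.Walk.cons hadj w', F', ?_, hcons', ?_, ?_, ?_⟩
      · intro a b'
        refine le_trans (hle' a b') (le_trans (fdrop_le F1 _ _ a b') (fdrop_le F _ _ a b'))
      · intro b'
        rw [hSS' b']
        rw [hF2, fdrop_apply, hF1, fdrop_apply]
        rw [if_neg (fun hh => (by simp [vOut] : (none : Nd V) ≠ vOut x) hh.1)]
        rw [if_neg (fun hh => (by simp [vIn] : (none : Nd V) ≠ vIn u) hh.1)]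
        omega
      · intro v
        have ha := hacc' v
        have h21 : F2 (vIn v) (vOut v) =
            F (vIn v) (vOut v) - (if v = u then 1 else 0) := by
          rw [hF2, fdrop_apply, hF1, fdrop_apply]
          rw [if_neg (fun hh => (vin_ne_vout v x) hh.1)]
          by_cases hvu : v = u
          · subst hvu
            rw [if_pos ⟨rfl, rfl⟩, if_pos rfl]
            omega
          · rw [if_neg (fun hh => hvu (vin_inj' hh.1)), if_neg hvu]
            omega
        rw [iList_cons hadj w' hw'nil, List.count_cons]
        simp only [beq_iff_eq]
        by_cases hvu : v = u
        · rw [if_pos (show u = v from hvu.symm)]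
          rw [if_pos hvu] at h21
          have : 1 ≤ F (vIn v) (vOut v) := by
            rw [hvu]; omega
          omega
        · rw [if_neg (fun hh : u = v => hvu hh.symm)]
          rw [if_neg hvu] at h21
          omega
      · rw [iList_cons hadj w' hw'nil]
        intro hmem
        rcases List.mem_cons.mp hmem with h | h
        · exact hur h.symm
        · exact hrint' h

end ExtractArg

theorem exists_f {V : Type*} [Fintype V] (g : V → ℕ) (s : ℕ) (h : s ≤ ∑ v, g v) :
    ∃ f : V → ℕ, (∀ v, f v ≤ g v) ∧ ∑ v, f v = s := by
  classical
  induction s with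
  | zero => exact ⟨fun _ => 0, fun _ => Nat.zero_le _, by simp⟩
  | succ s ih =>
    obtain ⟨f, hle, hsum⟩ := ih (by omega)
    have hlt : ∃ v, f v < g v := by
      by_contra hc
      push_neg at hc
      have : ∑ v, g v ≤ ∑ v, f v := Finset.sum_le_sum fun v _ => hc v
      omega
    obtain ⟨v, hv⟩ := hlt
    refine ⟨Function.update f v (f v + 1), ?_, ?_⟩
    · intro w
      by_cases hw : w = v
      · subst hw; rw [Function.update_self]; omega
      · rw [Function.update_of_ne hw]; exact hle w
    · rw [Finset.sum_update_of_mem (Finset.mem_univ v)]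
      rw [← Finset.add_sum_erase _ f (Finset.mem_univ v), Finset.erase_eq] at hsum
      omega

section ExtractAll

variable (G : SimpleGraph V) (r : V) (C f : V → ℕ) (s : ℕ)

theorem extract_all (hfr : f r = 0) :
    ∀ (m : ℕ) (F : Nd V → Nd V → ℕ), IsFlow G r C f s F → m ≤ fval F →
    ∃ L : List (Σ x : V, G.Walk x r), L.length = m ∧
      (∀ e ∈ L, e.1 ≠ r ∧ r ∉ iList e.2) ∧
      (∀ v, LUse L v ≤ 2 * F none (vOut v) + F (vIn v) (vOut v)) := by
  intro m
  induction m with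
  | zero =>
    intro F _ _
    exact ⟨[], rfl, by simp, fun v => by simp [LUse]⟩
  | succ m ih =>
    intro F hF hval
    have hex : ∃ b, F none b ≠ 0 := by
      by_contra hc
      push_neg at hc
      have : fval F = 0 := Finset.sum_eq_zero fun b _ => hc b
      omega
    obtain ⟨b, hb⟩ := hex
    have hcapb : cap G r C f s none b ≠ 0 := by
      have := hF.1 none b; omega
    obtain ⟨v₀, rfl⟩ := cap_SS G r C f s b hcapb
    have hv₀r : v₀ ≠ r := by
      intro hh
      have hf0 : f v₀ = 0 := by rw [hh]; exact hfr
      have := hF.1 none (vOut v₀)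
      rw [cap_SS_out] at this
      omega
    have hFb : 1 ≤ F none (vOut v₀) := Nat.one_le_iff_ne_zero.mpr hb
    set F0 := fdrop F none (vOut v₀) with hF0
    have htok : TokFlow G r C f s F0 v₀ := by
      refine ⟨?_, ?_, ?_⟩
      · intro a b'
        exact le_trans (fdrop_le F _ _ a b') (hF.1 a b')
      · intro y hy1 hy2 hy3
        have i0 := inflow_fdrop F none (vOut v₀) y hFb
        have o0 := outflow_fdrop F none (vOut v₀) y hFb
        rw [← hF0] at i0 o0
        rw [if_neg hy3] at i0
        rw [if_neg hy1] at o0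
        have := hF.2 y hy1 hy2
        omega
      · have i0 := inflow_fdrop F none (vOut v₀) (vOut v₀) hFb
        have o0 := outflow_fdrop F none (vOut v₀) (vOut v₀) hFb
        rw [← hF0] at i0 o0
        rw [if_pos rfl] at i0
        rw [if_neg (by simp [vOut])] at o0
        have := hF.2 (vOut v₀) (by simp [vOut]) (vout_ne_vin v₀ r)
        omega
    obtain ⟨w, F', hle', hcons', hSS', hacc', hrint'⟩ :=
      extract_one G r C f s (fmass F0) F0 v₀ hv₀r htok le_rfl
    have hcaps' : ∀ a b', F' a b' ≤ cap G r C f s a b' := fun a b' =>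
      le_trans (hle' a b') (le_trans (fdrop_le F _ _ a b') (hF.1 a b'))
    have hFlow' : IsFlow G r C f s F' := ⟨hcaps', hcons'⟩
    have hout0 : outflow F0 none + 1 = outflow F none := by
      have o0 := outflow_fdrop F none (vOut v₀) none hFb
      rw [← hF0, if_pos rfl] at o0
      exact o0
    have hSSsum : outflow F' none = outflow F0 none := by
      unfold outflow
      exact Finset.sum_congr rfl fun b' _ => hSS' b'
    have hfval' : fval F' + 1 = fval F := by
      unfold fval
      rw [hSSsum]
      exact hout0
    obtain ⟨L', hlen', hsrc', huse'⟩ := ih F' hFlow' (by omega)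
    refine ⟨⟨v₀, w⟩ :: L', by simp [hlen'], ?_, ?_⟩
    · intro e he
      rcases List.mem_cons.mp he with rfl | h
      · exact ⟨hv₀r, hrint'⟩
      · exact hsrc' e h
    · intro v
      have hu := huse' v
      have e1 : F' none (vOut v) + (if v = v₀ then 1 else 0) = F none (vOut v) := by
        rw [hSS' (vOut v), hF0, fdrop_apply]
        by_cases hvv : v = v₀
        · rw [if_pos hvv]
          have hvv' : vOut v = vOut v₀ := by rw [hvv]
          rw [if_pos ⟨rfl, hvv'⟩]
          have : F none (vOut v) = F none (vOut v₀) := by rw [hvv]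
          omega
        · rw [if_neg hvv, if_neg (fun hh => hvv (vout_inj' hh.2))]
          omega
      have e3 : F0 (vIn v) (vOut v) = F (vIn v) (vOut v) := by
        rw [hF0, fdrop_apply]
        rw [if_neg (fun hh => (by simp [vIn] : vIn v ≠ none) hh.1)]
        omega
      have e2 : F (vIn v) (vOut v) = F' (vIn v) (vOut v) + (iList w).count v := by
        have := hacc' v
        omega
      simp only [LUse, List.map_cons, List.sum_cons] at hu ⊢
      rw [wUse_mk]
      by_cases hvv : v = v₀
      · rw [if_pos hvv] at e1 ⊢
        omega
      · rw [if_neg hvv] at e1 ⊢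
        omega

end ExtractAll

/-- The master delivery lemma: under connectivity and supply hypotheses we can
move `s` extra pebbles onto `r`. -/
theorem fan_deliver (G : SimpleGraph V) (r : V) (C : V → ℕ) (s k z : ℕ)
    (hconn : ∀ S : Set V, S.ncard < k → ((⊤ : G.Subgraph).deleteVerts S).coe.Connected)
    (hzc : (Finset.univ.filter (fun v => C v = 0)).card ≤ z)
    (hks : s + z ≤ k)
    (hsupply : s ≤ ∑ v ∈ Finset.univ.erase r, C v / 2) :
    ∃ D', Relation.ReflTransGen (PebStep G) C D' ∧ C r + s ≤ D' r := by
  classical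
  set g : V → ℕ := fun v => if v = r then 0 else C v / 2 with hg
  have hgr : g r = 0 := by simp [hg]
  have hgsum : ∑ v, g v = ∑ v ∈ Finset.univ.erase r, C v / 2 := by
    rw [← Finset.add_sum_erase _ g (Finset.mem_univ r), hgr, Nat.zero_add]
    exact Finset.sum_congr rfl fun v hv => by
      simp [hg, Finset.ne_of_mem_erase hv]
  obtain ⟨f, hfle, hfsum⟩ := exists_f g s (by omega)
  have hfr : f r = 0 := by
    have h1 := hfle r
    rw [hgr] at h1
    omega
  have hf2 : ∀ v, 2 * f v ≤ C v := by
    intro v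
    have h1 := hfle v
    by_cases hvr : v = r
    · have h0 : g v = 0 := by simp [hg, hvr]
      omega
    · have h0 : g v = C v / 2 := by simp [hg, hvr]
      have := Nat.div_mul_le_self (C v) 2
      omega
  obtain ⟨F, hF, hfval⟩ := maxflow_value_ge G r C f s k z hconn hzc hks hfr hfsum hf2
  obtain ⟨L, hlen, hsrc, huse⟩ := extract_all G r C f s hfr s F hF hfval
  have hbound : ∀ v, v ≠ r → LUse L v ≤ C v := by
    intro v hvr
    have h1 := huse v
    have h2 := hF.1 none (vOut v)
    have h3 := hF.1 (vIn v) (vOut v)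
    rw [cap_SS_out] at h2
    rw [cap_in_out G r C f s v hvr] at h3
    have := hf2 v
    omega
  obtain ⟨D', hrtg, hr⟩ := exec_list L C hsrc hbound
  exact ⟨D', hrtg, by omega⟩

end FlowAux


theorem slide_lemma {V : Type*} [Fintype V] (G : SimpleGraph V) (k : ℕ)
    (hG : KConnected G k) (r : V) (C : V → ℕ) (y z : ℕ)
    (hsize : confSize C = Fintype.card V + y) (hz : numZeros C = z)
    (hk : (y + 3 * z + 1) / 2 ≤ k) :
    Solvable G C r ((y + z + 1) / 2) := by
  classical
  by_cases hts : (y + z + 1) / 2 ≤ C r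
  · exact ⟨C, Relation.ReflTransGen.refl, hts⟩
  · push_neg at hts
    have hzcard : (Finset.univ.filter (fun v => C v = 0)).card = z := by
      rw [← hz]
      unfold numZeros
      rw [show {v : V | C v = 0} = ↑(Finset.univ.filter (fun v => C v = 0)) by ext v; simp]
      rw [Set.ncard_coe_finset]
    have hzle : z ≤ Fintype.card V := by
      rw [← hzcard]
      exact le_trans (Finset.card_filter_le _ _) (by simp)
    have hsum : ∑ v, C v = Fintype.card V + y := hsize
    have hpt : ∀ v, C v ≤ 2 * (C v / 2) + (if C v = 0 then 0 else 1) := by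
      intro v
      by_cases h : C v = 0
      · simp [h]
      · rw [if_neg h]
        omega
    have h2 : ∑ v, C v ≤ ∑ v, (2 * (C v / 2) + (if C v = 0 then 0 else 1)) :=
      Finset.sum_le_sum fun v _ => hpt v
    have h3 : ∑ v, (2 * (C v / 2) + (if C v = 0 then 0 else 1)) =
        2 * (∑ v, C v / 2) + (Fintype.card V - z) := by
      rw [Finset.sum_add_distrib, ← Finset.mul_sum]
      congr 1
      rw [Finset.sum_ite, Finset.sum_const, Finset.sum_const]
      simp only [smul_eq_mul, mul_zero, mul_one, zero_add]
      have h5 := Finset.card_filter_add_card_filter_not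
        (s := (Finset.univ : Finset V)) (p := fun v => C v = 0)
      rw [hzcard, Finset.card_univ] at h5
      omega
    have hpot : y + z ≤ 2 * ∑ v, C v / 2 := by omega
    have hsplitP : ∑ v, C v / 2 = C r / 2 + ∑ v ∈ Finset.univ.erase r, C v / 2 :=
      (Finset.add_sum_erase _ _ (Finset.mem_univ r)).symm
    have hsupply : (y + z + 1) / 2 - C r ≤ ∑ v ∈ Finset.univ.erase r, C v / 2 := by
      omega
    have hks : ((y + z + 1) / 2 - C r) + z ≤ k := by omega
    obtain ⟨D', hrtg, hr⟩ := fan_deliver G r C ((y + z + 1) / 2 - C r) k z hG.2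
      (by rw [hzcard]) hks hsupply
    exact ⟨D', hrtg, by omega⟩
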